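/- Let G be isomorphic to C_3(a,a,a) or to C_5, and let λ ≠ 0 be an eigenvalue of A(G) with m_λ(G) = 2. Then for every vertex x of G, m_λ(G − x) = 1. -/

import Mathlib

open Module

attribute [local instance] Classical.propDecidable

noncomputable def adjMat {V : Type*} [Fintype V] (G : SimpleGraph V) : Matrix V V ℝ :=
  Matrix.of fun u v => if G.Adj u v then 1 else 0

noncomputable def eigMult {V : Type*} [Fintype V] (G : SimpleGraph V) (μ : ℝ) : ℕ :=
  Module.finrank ℝ (Module.End.eigenspace (adjMat G).mulVecLin μ)

def HasEig {V : Type*} [Fintype V] (G : SimpleGraph V) (μ : ℝ) : Prop :=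
  Module.End.HasEigenvalue (adjMat G).mulVecLin μ

def IsMatchingSet {V : Type*} (G : SimpleGraph V) (M : Finset (Sym2 V)) : Prop :=
  (∀ e ∈ M, e ∈ G.edgeSet) ∧
  ∀ e ∈ M, ∀ f ∈ M, e ≠ f → ∀ v, v ∈ e → v ∉ f

def IsInducedMatchingSet {V : Type*} (G : SimpleGraph V) (M : Finset (Sym2 V)) : Prop :=
  IsMatchingSet G M ∧
  ∀ e ∈ M, ∀ f ∈ M, e ≠ f → ∀ u v, u ∈ e → v ∈ f → ¬ G.Adj u v

noncomputable def matchNum {V : Type*} [Fintype V] (G : SimpleGraph V) : ℕ :=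
  sSup {k | ∃ M, IsMatchingSet G M ∧ M.card = k}

noncomputable def indMatchNum {V : Type*} [Fintype V] (G : SimpleGraph V) : ℕ :=
  sSup {k | ∃ M, IsInducedMatchingSet G M ∧ M.card = k}

noncomputable def cyclomatic {V : Type*} [Fintype V] (G : SimpleGraph V) : ℕ :=
  G.edgeSet.ncard + 1 - Fintype.card V

def delV {V : Type*} (G : SimpleGraph V) (v : V) : SimpleGraph {u : V // u ≠ v} :=
  G.induce {u : V | u ≠ v}

def starGraph (n : ℕ) : SimpleGraph (Fin (n + 1)) :=
  SimpleGraph.fromRel (fun u _ => u = 0)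

def triStar (a : ℕ) : SimpleGraph (Fin 3 ⊕ Fin 3 × Fin a) :=
  SimpleGraph.fromRel (fun x y =>
    (∃ i j, x = Sum.inl i ∧ y = Sum.inl j) ∨
    (∃ i k, x = Sum.inl i ∧ y = Sum.inr (i, k)))

section infra

variable {V : Type*} [Fintype V] {W : Type*} [Fintype W]

lemma mem_eig_iff (G : SimpleGraph V) (μ : ℝ) (f : V → ℝ) :
    f ∈ Module.End.eigenspace (adjMat G).mulVecLin μ ↔
      ∀ u, (∑ v, (if G.Adj u v then (1:ℝ) else 0) * f v) = μ * f u := by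
  rw [Module.End.mem_eigenspace_iff]
  constructor
  · intro h u
    have := congrFun h u
    simpa [adjMat, Matrix.mulVecLin_apply, Matrix.mulVec, dotProduct] using this
  · intro h
    funext u
    simpa [adjMat, Matrix.mulVecLin_apply, Matrix.mulVec, dotProduct] using h u

lemma mem_eig_comp {G : SimpleGraph V} {H : SimpleGraph W} (e : G ≃g H) (μ : ℝ)
    (g : W → ℝ) (hg : g ∈ Module.End.eigenspace (adjMat H).mulVecLin μ) :
    (fun v => g (e v)) ∈ Module.End.eigenspace (adjMat G).mulVecLin μ := by
  rw [mem_eig_iff] at hg ⊢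
  intro u
  have := hg (e u)
  rw [← this]
  refine Fintype.sum_equiv e.toEquiv _ _ fun v => ?_
  congr 1
  simp only [RelIso.coe_fn_toEquiv]
  by_cases h : G.Adj u v
  · rw [if_pos h, if_pos (e.map_adj_iff.2 h)]
  · rw [if_neg h, if_neg (fun hc => h (e.map_adj_iff.1 hc))]

lemma eigMult_iso {G : SimpleGraph V} {H : SimpleGraph W} (e : G ≃g H) (μ : ℝ) :
    eigMult G μ = eigMult H μ := by
  let L : (V → ℝ) ≃ₗ[ℝ] (W → ℝ) := LinearEquiv.funCongrLeft ℝ ℝ e.symm.toEquiv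
  have hmap : (Module.End.eigenspace (adjMat G).mulVecLin μ).map L.toLinearMap
      = Module.End.eigenspace (adjMat H).mulVecLin μ := by
    ext g
    rw [show L.toLinearMap = (L : (V → ℝ) →ₗ[ℝ] (W → ℝ)) from rfl, Submodule.mem_map_equiv]
    have hLs : (L.symm g) = fun v => g (e v) := by
      funext v
      rfl
    rw [hLs]
    constructor
    · intro h
      have h2 := mem_eig_comp e.symm μ _ h
      have h3 : (fun w => g (e (e.symm w))) = g := by
        funext w
        rw [RelIso.apply_symm_apply]
      rwa [h3] at h2
    · intro h
      exact mem_eig_comp e μ g h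
  rw [eigMult, eigMult, ← hmap, LinearEquiv.finrank_map_eq]

lemma sum_subtype_ne (x : V) (h : V → ℝ) :
    ∑ v : {u : V // u ≠ x}, h v.1 = (∑ v, h v) - h x := by
  rw [← Finset.sum_erase_eq_sub (Finset.mem_univ x)]
  exact (Finset.sum_subtype _ (by simp) h).symm

lemma sum_dite_ne (x : V) (φ : V → ℝ) (ψ : {u : V // u ≠ x} → ℝ) :
    (∑ v, φ v * (if h : v ≠ x then ψ ⟨v, h⟩ else 0)) = ∑ v : {u : V // u ≠ x}, φ v.1 * ψ v :=
 by
  have h0 := sum_subtype_ne x (fun v => φ v * if h : v ≠ x then ψ ⟨v, h⟩ else 0)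
  beta_reduce at h0
  have h1 : (φ x * if h : x ≠ x then ψ ⟨x, h⟩ else 0) = 0 := by simp
  rw [h1, sub_zero] at h0
  rw [← h0]
  exact Finset.sum_congr rfl (fun v _ => by rw [dif_pos v.2])

lemma delV_adj (G : SimpleGraph V) (x : V) (u v : {u : V // u ≠ x}) :
    (delV G x).Adj u v ↔ G.Adj u.1 v.1 := Iff.rfl

noncomputable def delSpace (G : SimpleGraph V) (x : V) (μ : ℝ) : Submodule ℝ (V → ℝ) where
  carrier := {F | F x = 0 ∧ ∀ u, u ≠ x →
      (∑ v, (if G.Adj u v then (1:ℝ) else 0) * F v) = μ * F u}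
  add_mem' := by
    rintro f g ⟨hf0, hf⟩ ⟨hg0, hg⟩
    refine ⟨by simp [hf0, hg0], fun u hu => ?_⟩
    simp only [Pi.add_apply, mul_add, Finset.sum_add_distrib, hf u hu, hg u hu]
  zero_mem' := ⟨rfl, fun u _ => by simp⟩
  smul_mem' := by
    rintro c f ⟨hf0, hf⟩
    refine ⟨by simp [hf0], fun u hu => ?_⟩
    simp only [Pi.smul_apply, smul_eq_mul, mul_left_comm, ← Finset.mul_sum, hf u hu]

lemma mem_delSpace_iff (G : SimpleGraph V) (x : V) (μ : ℝ) (F : V → ℝ) :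
    F ∈ delSpace G x μ ↔ F x = 0 ∧ ∀ u, u ≠ x →
      (∑ v, (if G.Adj u v then (1:ℝ) else 0) * F v) = μ * F u := Iff.rfl

lemma eigMult_delV (G : SimpleGraph V) (x : V) (μ : ℝ) :
    eigMult (delV G x) μ = finrank ℝ (delSpace G x μ) := by
  refine (LinearEquiv.finrank_eq ?_).symm
  refine
    { toFun := fun F => ⟨fun u => F.1 u.1, ?_⟩
      map_add' := fun F F' => rfl
      map_smul' := fun c F => rfl
      invFun := fun g => ⟨fun v => if h : v ≠ x then g.1 ⟨v, h⟩ else 0, ?_, ?_⟩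
      left_inv := ?_
      right_inv := ?_ }
  · -- membership in eigenspace of delV
    obtain ⟨hF0, hF⟩ := F.2
    rw [mem_eig_iff]
    intro u
    have h1 : ∑ v : {u : V // u ≠ x}, (if (delV G x).Adj u v then (1:ℝ) else 0) * F.1 v.1
        = ∑ v : {w : V // w ≠ x}, (if G.Adj u.1 v.1 then (1:ℝ) else 0) * F.1 v.1 := rfl
    rw [h1, sum_subtype_ne x (fun v => (if G.Adj u.1 v then (1:ℝ) else 0) * F.1 v)]
    rw [hF u.1 u.2, hF0, mul_zero, sub_zero]
  · simp
  · intro u hu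
    have hg := (mem_eig_iff (delV G x) μ g.1).1 g.2 ⟨u, hu⟩
    have h1 : ∑ v : {w : V // w ≠ x}, (if (delV G x).Adj ⟨u, hu⟩ v then (1:ℝ) else 0) * g.1 v
        = ∑ v : {w : V // w ≠ x}, (if G.Adj u v.1 then (1:ℝ) else 0) * g.1 v := rfl
    rw [h1] at hg
    rw [sum_dite_ne x (fun v => if G.Adj u v then (1:ℝ) else 0) g.1, hg]
    show μ * g.1 ⟨u, hu⟩ = μ * (if h : u ≠ x then g.1 ⟨u, h⟩ else 0)
    rw [dif_pos hu]
  · intro F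
    apply Subtype.ext
    funext v
    by_cases h : v ≠ x
    · simp only [dif_pos h]
    · push_neg at h
      subst h
      simp only [dif_neg (not_not.2 rfl)]
      exact F.2.1.symm
  · intro g
    apply Subtype.ext
    funext u
    simp only [dif_pos u.2]

end infra


section tri

variable {a : ℕ}

lemma triStar_adj_ll (i j : Fin 3) : (triStar a).Adj (.inl i) (.inl j) ↔ i ≠ j := by
  simp [triStar, SimpleGraph.fromRel_adj]

lemma triStar_adj_lr (i : Fin 3) (p : Fin 3 × Fin a) :
    (triStar a).Adj (.inl i) (.inr p) ↔ p.1 = i := by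
  simp [triStar, SimpleGraph.fromRel_adj]
  constructor
  · rintro ⟨k, rfl⟩; rfl
  · intro h; exact ⟨p.2, by rw [← h]⟩

lemma triStar_adj_rl (p : Fin 3 × Fin a) (i : Fin 3) :
    (triStar a).Adj (.inr p) (.inl i) ↔ p.1 = i := by
  rw [SimpleGraph.adj_comm, triStar_adj_lr]

lemma triStar_adj_rr (p q : Fin 3 × Fin a) : ¬ (triStar a).Adj (.inr p) (.inr q) := by
  simp [triStar, SimpleGraph.fromRel_adj]

lemma triStar_row_inl (F : (Fin 3 ⊕ Fin 3 × Fin a) → ℝ) (i : Fin 3) :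
    (∑ v, (if (triStar a).Adj (.inl i) v then (1:ℝ) else 0) * F v)
      = ((∑ j, F (.inl j)) - F (.inl i)) + ∑ k, F (.inr (i, k)) := by
  rw [Fintype.sum_sum_type]
  congr 1
  · have h1 : ∀ j : Fin 3, (if (triStar a).Adj (.inl i) (.inl j) then (1:ℝ) else 0) * F (.inl j)
        = F (.inl j) - (if j = i then F (.inl j) else 0) := by
      intro j
      by_cases h : j = i
      · subst h; rw [if_neg (by simp [triStar_adj_ll]), if_pos rfl]; ring
      · rw [if_pos ((triStar_adj_ll i j).2 (Ne.symm h)), if_neg h]; ring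
    rw [Finset.sum_congr rfl (fun j _ => h1 j), Finset.sum_sub_distrib,
      Finset.sum_ite_eq' Finset.univ i (fun j => F (.inl j))]
    simp
  · rw [Fintype.sum_prod_type]
    have h2 : ∀ j : Fin 3,
        (∑ k, (if (triStar a).Adj (.inl i) (.inr (j, k)) then (1:ℝ) else 0) * F (.inr (j, k)))
        = if j = i then ∑ k, F (.inr (i, k)) else 0 := by
      intro j
      by_cases h : j = i
      · subst h
        rw [if_pos rfl]
        exact Finset.sum_congr rfl (fun k _ => by
          rw [if_pos ((triStar_adj_lr j (j, k)).2 rfl), one_mul])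
      · rw [if_neg h]
        exact Finset.sum_eq_zero (fun k _ => by
          rw [if_neg (fun hc => h ((triStar_adj_lr i (j, k)).1 hc)), zero_mul])
    rw [Finset.sum_congr rfl (fun j _ => h2 j),
      Finset.sum_ite_eq' Finset.univ i (fun _ => ∑ k, F (.inr (i, k)))]
    simp

lemma triStar_row_inr (F : (Fin 3 ⊕ Fin 3 × Fin a) → ℝ) (p : Fin 3 × Fin a) :
    (∑ v, (if (triStar a).Adj (.inr p) v then (1:ℝ) else 0) * F v) = F (.inl p.1) := by
  rw [Fintype.sum_sum_type]
  have h1 : ∀ j : Fin 3, (if (triStar a).Adj (.inr p) (.inl j) then (1:ℝ) else 0) * F (.inl j)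
      = if j = p.1 then F (.inl j) else 0 := by
    intro j
    by_cases h : j = p.1
    · rw [if_pos ((triStar_adj_rl p j).2 h.symm), if_pos h, one_mul]
    · rw [if_neg (fun hc => h ((triStar_adj_rl p j).1 hc).symm), if_neg h, zero_mul]
  have h2 : (∑ q : Fin 3 × Fin a, (if (triStar a).Adj (.inr p) (.inr q) then (1:ℝ) else 0) * F (.inr q)) = 0 :=
    Finset.sum_eq_zero (fun q _ => by rw [if_neg (triStar_adj_rr p q), zero_mul])
  rw [Finset.sum_congr rfl (fun j _ => h1 j), h2,
    Finset.sum_ite_eq' Finset.univ p.1 (fun j => F (.inl j))]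
  simp

end tri

section tri2

lemma f3a : ∀ i : Fin 3, i + 1 ≠ i := by decide
lemma f3b : ∀ i : Fin 3, i + 2 ≠ i := by decide
lemma f3c : ∀ i : Fin 3, i + 2 ≠ i + 1 := by decide
lemma f3cover : ∀ i0 j : Fin 3, j = i0 ∨ j = i0 + 1 ∨ j = i0 + 2 := by decide

noncomputable def eps (i0 j : Fin 3) : ℝ := if j = i0 then 0 else if j = i0 + 1 then 1 else -1

lemma eps_self (i0 : Fin 3) : eps i0 i0 = 0 := if_pos rfl
lemma eps_one (i0 : Fin 3) : eps i0 (i0 + 1) = 1 := by rw [eps, if_neg (f3a i0), if_pos rfl]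
lemma eps_two (i0 : Fin 3) : eps i0 (i0 + 2) = -1 := by rw [eps, if_neg (f3b i0), if_neg (f3c i0)]

lemma sum3 (g : Fin 3 → ℝ) (i0 : Fin 3) : ∑ j, g j = g i0 + g (i0 + 1) + g (i0 + 2) := by
  rw [← Fintype.sum_equiv (Equiv.addLeft i0) (fun j => g (i0 + j)) g (fun j => rfl),
    Fin.sum_univ_three, add_zero]

lemma eps_sum (i0 : Fin 3) : ∑ j, eps i0 j = 0 := by
  rw [sum3 (eps i0) i0, eps_self, eps_one, eps_two]; ring

variable {a : ℕ}

lemma triStar_eig (a : ℕ) (μ : ℝ) (hμ : μ ≠ 0) (hm : eigMult (triStar a) μ = 2) :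
    μ ^ 2 + μ = (a : ℝ) := by
  by_contra hq'
  have hq : μ ^ 2 + μ - (a : ℝ) ≠ 0 := fun h => hq' (by linarith)
  set w : (Fin 3 ⊕ Fin 3 × Fin a) → ℝ := Sum.elim (fun _ => μ) (fun _ => 1) with hw
  have hle : Module.End.eigenspace (adjMat (triStar a)).mulVecLin μ ≤ Submodule.span ℝ {w} := by
    intro f hf
    rw [mem_eig_iff] at hf
    have hpend : ∀ p : Fin 3 × Fin a, f (.inl p.1) = μ * f (.inr p) := by
      intro p
      have h := hf (.inr p)
      rwa [triStar_row_inr] at h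
    have htri : ∀ i, ((∑ j, f (.inl j)) - f (.inl i)) + ∑ k, f (.inr (i, k)) = μ * f (.inl i) := by
      intro i
      have h := hf (.inl i)
      rwa [triStar_row_inl] at h
    have hps : ∀ i, μ * (∑ k, f (.inr (i, k))) = (a : ℝ) * f (.inl i) := by
      intro i
      rw [Finset.mul_sum]
      have h3 : ∀ k : Fin a, μ * f (.inr (i, k)) = f (.inl i) := fun k => (hpend (i, k)).symm
      rw [Finset.sum_congr rfl (fun k _ => h3 k), Finset.sum_const, Finset.card_univ,
        Fintype.card_fin, nsmul_eq_mul]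
    have hkey : ∀ i, μ * (∑ j, f (.inl j)) = (μ ^ 2 + μ - (a : ℝ)) * f (.inl i) := by
      intro i
      have h1 := htri i
      have h2 := hps i
      linear_combination μ * h1 - h2
    rw [Submodule.mem_span_singleton]
    refine ⟨(∑ j, f (.inl j)) / (μ ^ 2 + μ - (a : ℝ)), ?_⟩
    funext v
    cases v with
    | inl i =>
      have h := hkey i
      simp only [Pi.smul_apply, hw, Sum.elim_inl, smul_eq_mul]
      rw [div_mul_eq_mul_div, div_eq_iff hq]
      linear_combination h
    | inr p =>
      have h := hkey p.1
      rw [hpend p] at h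
      have h2 : (∑ j, f (.inl j)) = (μ ^ 2 + μ - (a : ℝ)) * f (.inr p) :=
        mul_left_cancel₀ hμ (by linear_combination h)
      simp only [Pi.smul_apply, hw, Sum.elim_inr, smul_eq_mul, mul_one]
      rw [div_eq_iff hq]
      linear_combination h2
  have hw0 : w ≠ 0 := by
    intro h
    have h2 := congrFun h (Sum.inl 0)
    simp [hw] at h2
    exact hμ h2
  have hfin : finrank ℝ (Module.End.eigenspace (adjMat (triStar a)).mulVecLin μ) ≤ 1 := by
    calc finrank ℝ (Module.End.eigenspace (adjMat (triStar a)).mulVecLin μ)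
        ≤ finrank ℝ (Submodule.span ℝ {w}) := Submodule.finrank_mono hle
      _ = 1 := finrank_span_singleton hw0
  rw [eigMult] at hm
  omega

end tri2

section tri3

variable {a : ℕ}

noncomputable def Wtri (a : ℕ) (μ : ℝ) (i0 : Fin 3) : (Fin 3 ⊕ Fin 3 × Fin a) → ℝ :=
  Sum.elim (fun j => μ * eps i0 j) (fun p => eps i0 p.1)

@[simp] lemma Wtri_inl (μ : ℝ) (i0 j : Fin 3) : Wtri a μ i0 (.inl j) = μ * eps i0 j := rfl
@[simp] lemma Wtri_inr (μ : ℝ) (i0 : Fin 3) (p : Fin 3 × Fin a) :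
    Wtri a μ i0 (.inr p) = eps i0 p.1 := rfl

lemma triStar_del (a : ℕ) (μ : ℝ) (hμ : μ ≠ 0) (hq : μ ^ 2 + μ = (a : ℝ))
    (x : Fin 3 ⊕ Fin 3 × Fin a) :
    Module.finrank ℝ (delSpace (triStar a) x μ) = 1 := by
  obtain ⟨i0, hx⟩ : ∃ i0, Sum.elim id Prod.fst x = i0 := ⟨_, rfl⟩
  have hq'' : μ ^ 2 + μ - (a : ℝ) = 0 := by linarith
  have hW0 : Wtri a μ i0 ≠ 0 := by
    intro h
    have h2 := congrFun h (Sum.inl (i0 + 1))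
    rw [Wtri_inl, eps_one, mul_one] at h2
    exact hμ h2
  have hspan : delSpace (triStar a) x μ = Submodule.span ℝ {Wtri a μ i0} := by
    apply le_antisymm
    · intro F hF
      obtain ⟨hF0, hFeq⟩ := hF
      have htri : ∀ i : Fin 3, (Sum.inl i : Fin 3 ⊕ Fin 3 × Fin a) ≠ x →
          ((∑ j, F (.inl j)) - F (.inl i)) + ∑ k, F (.inr (i, k)) = μ * F (.inl i) := by
        intro i hi
        have h := hFeq (.inl i) hi
        rwa [triStar_row_inl] at h
      have hpend : ∀ p : Fin 3 × Fin a, (Sum.inr p : Fin 3 ⊕ Fin 3 × Fin a) ≠ x →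
          F (.inl p.1) = μ * F (.inr p) := by
        intro p hp
        have h := hFeq (.inr p) hp
        rwa [triStar_row_inr] at h
      have key : F (.inl i0) = 0 ∧ (∑ j, F (.inl j)) = 0 ∧
          ∀ p : Fin 3 × Fin a, F (.inl p.1) = μ * F (.inr p) := by
        cases x with
        | inl i =>
          have hii : i = i0 := by simpa using hx
          subst hii
          have h0 : F (.inl i) = 0 := hF0
          have hpend' : ∀ p : Fin 3 × Fin a, F (.inl p.1) = μ * F (.inr p) :=
            fun p => hpend p (by simp)
          have hps : μ * (∑ k, F (.inr (i + 1, k))) = (a : ℝ) * F (.inl (i + 1)) := by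
            rw [Finset.mul_sum]
            have h3 : ∀ k : Fin a, μ * F (.inr (i + 1, k)) = F (.inl (i + 1)) :=
              fun k => (hpend' (i + 1, k)).symm
            rw [Finset.sum_congr rfl (fun k _ => h3 k), Finset.sum_const, Finset.card_univ,
              Fintype.card_fin, nsmul_eq_mul]
          have h1 := htri (i + 1) (by simpa using f3a i)
          have hs : (∑ j, F (.inl j)) = 0 := by
            have h4 : μ * (∑ j, F (.inl j)) = (μ ^ 2 + μ - (a : ℝ)) * F (.inl (i + 1)) := by
              linear_combination μ * h1 - hps
            rw [hq'', zero_mul] at h4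
            exact (mul_eq_zero.1 h4).resolve_left hμ
          exact ⟨h0, hs, hpend'⟩
        | inr p0 =>
          have hp01 : p0.1 = i0 := by simpa using hx
          have hpend' : ∀ p : Fin 3 × Fin a, p ≠ p0 → F (.inl p.1) = μ * F (.inr p) :=
            fun p hp => hpend p (by simp [hp])
          have hps : ∀ j : Fin 3, j ≠ i0 → μ * (∑ k, F (.inr (j, k))) = (a : ℝ) * F (.inl j) := by
            intro j hj
            rw [Finset.mul_sum]
            have h3 : ∀ k : Fin a, μ * F (.inr (j, k)) = F (.inl j) := by
              intro k
              exact (hpend' (j, k) (fun hc => hj (by rw [← hp01, ← hc]))).symm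
            rw [Finset.sum_congr rfl (fun k _ => h3 k), Finset.sum_const, Finset.card_univ,
              Fintype.card_fin, nsmul_eq_mul]
          have h1 := htri (i0 + 1) (by simp)
          have hs : (∑ j, F (.inl j)) = 0 := by
            have h4 := hps (i0 + 1) (f3a i0)
            have h5 : μ * (∑ j, F (.inl j)) = (μ ^ 2 + μ - (a : ℝ)) * F (.inl (i0 + 1)) := by
              linear_combination μ * h1 - h4
            rw [hq'', zero_mul] at h5
            exact (mul_eq_zero.1 h5).resolve_left hμ
          have hsum0 : μ * (∑ k, F (.inr (i0, k))) = (a : ℝ) * F (.inl i0) - F (.inl i0) := by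
            rw [Finset.mul_sum]
            have h3 : ∀ k : Fin a, μ * F (.inr (i0, k))
                = F (.inl i0) - (if k = p0.2 then F (.inl i0) else 0) := by
              intro k
              by_cases hk : k = p0.2
              · subst hk
                have hpp : ((i0, p0.2) : Fin 3 × Fin a) = p0 := by
                  rw [← hp01]
                rw [if_pos rfl, hpp, hF0]
                ring
              · rw [if_neg hk, sub_zero]
                exact (hpend' (i0, k) (fun hc => hk (congrArg Prod.snd hc))).symm
            rw [Finset.sum_congr rfl (fun k _ => h3 k), Finset.sum_sub_distrib,
              Finset.sum_ite_eq' Finset.univ p0.2 (fun _ => F (.inl i0)), Finset.sum_const,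
              Finset.card_univ, Fintype.card_fin, nsmul_eq_mul]
            simp
          have h7 := htri i0 (by simp)
          have h0 : F (.inl i0) = 0 := by
            linear_combination μ * hs - μ * h7 + hsum0 - F (.inl i0) * hq''
          have hpd : ∀ p : Fin 3 × Fin a, F (.inl p.1) = μ * F (.inr p) := by
            intro p
            by_cases hp : p = p0
            · subst hp
              rw [hp01, h0, hF0, mul_zero]
            · exact hpend' p hp
          exact ⟨h0, hs, hpd⟩
      obtain ⟨h0, hs, hpd⟩ := key
      have hs2 : F (.inl (i0 + 2)) = - F (.inl (i0 + 1)) := by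
        have h9 := sum3 (fun j => F (.inl j)) i0
        rw [hs] at h9
        rw [h0] at h9
        linarith
      have hval : ∀ j : Fin 3, F (.inl j) = F (.inl (i0 + 1)) * eps i0 j := by
        intro j
        rcases f3cover i0 j with h | h | h <;> subst h
        · rw [eps_self, h0, mul_zero]
        · rw [eps_one, mul_one]
        · rw [eps_two, hs2]; ring
      rw [Submodule.mem_span_singleton]
      refine ⟨F (.inl (i0 + 1)) / μ, ?_⟩
      funext v
      cases v with
      | inl j =>
        simp only [Pi.smul_apply, Wtri_inl, smul_eq_mul]
        rw [hval j]
        field_simp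
      | inr p =>
        simp only [Pi.smul_apply, Wtri_inr, smul_eq_mul]
        have h10 := hpd p
        rw [hval p.1] at h10
        field_simp
        linear_combination h10
    · rw [Submodule.span_le, Set.singleton_subset_iff]
      refine ⟨?_, ?_⟩
      · cases x with
        | inl i =>
          have hii : i = i0 := by simpa using hx
          subst hii
          rw [Wtri_inl, eps_self, mul_zero]
        | inr p0 =>
          have hp01 : p0.1 = i0 := by simpa using hx
          rw [Wtri_inr, hp01, eps_self]
      · intro u _
        cases u with
        | inl j =>
          rw [triStar_row_inl]
          have e1 : (∑ j', Wtri a μ i0 (.inl j')) = 0 := by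
            simp only [Wtri_inl]
            rw [← Finset.mul_sum, eps_sum, mul_zero]
          have e2 : (∑ k : Fin a, Wtri a μ i0 (.inr (j, k))) = (a : ℝ) * eps i0 j := by
            simp only [Wtri_inr]
            rw [Finset.sum_const, Finset.card_univ, Fintype.card_fin, nsmul_eq_mul]
          rw [e1, e2, Wtri_inl]
          linear_combination (-(eps i0 j)) * hq
        | inr p =>
          rw [triStar_row_inr, Wtri_inr, Wtri_inl]
  rw [hspan]
  exact finrank_span_singleton hW0

end tri3

section c5

lemma c5adj : ∀ u v : Fin 5, (SimpleGraph.cycleGraph 5).Adj u v ↔ (v = u + 1 ∨ v = u + 4) := by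
  decide

lemma f5a : ∀ u : Fin 5, u + 1 ≠ u + 4 := by decide
lemma f5cover : ∀ x u : Fin 5, u = x ∨ u = x + 1 ∨ u = x + 2 ∨ u = x + 3 ∨ u = x + 4 := by decide
lemma f5b1 : ∀ x : Fin 5, x + 1 ≠ x := by decide
lemma f5b2 : ∀ x : Fin 5, x + 2 ≠ x := by decide
lemma f5b3 : ∀ x : Fin 5, x + 3 ≠ x := by decide
lemma f5c0 : ∀ x : Fin 5, x - x = 0 := by decide
lemma f5c1 : ∀ x : Fin 5, (x + 1) - x = 1 := by decide
lemma f5c2 : ∀ x : Fin 5, (x + 2) - x = 2 := by decide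
lemma f5c3 : ∀ x : Fin 5, (x + 3) - x = 3 := by decide
lemma f5c4 : ∀ x : Fin 5, (x + 4) - x = 4 := by decide
lemma f5d1 : ∀ x : Fin 5, x + 1 + 1 = x + 2 := by decide
lemma f5d2 : ∀ x : Fin 5, x + 1 + 4 = x := by decide
lemma f5d3 : ∀ x : Fin 5, x + 2 + 1 = x + 3 := by decide
lemma f5d4 : ∀ x : Fin 5, x + 2 + 4 = x + 1 := by decide
lemma f5d5 : ∀ x : Fin 5, x + 3 + 1 = x + 4 := by decide
lemma f5d6 : ∀ x : Fin 5, x + 3 + 4 = x + 2 := by decide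
lemma f5d7 : ∀ x : Fin 5, x + 4 + 1 = x := by decide
lemma f5d8 : ∀ x : Fin 5, x + 4 + 4 = x + 3 := by decide

lemma c5row (F : Fin 5 → ℝ) (u : Fin 5) :
    (∑ v, (@ite ℝ ((SimpleGraph.cycleGraph 5).Adj u v) (Classical.propDecidable _) 1 0) * F v)
      = F (u + 1) + F (u + 4) := by
  have h1 : ∀ v : Fin 5,
      (@ite ℝ ((SimpleGraph.cycleGraph 5).Adj u v) (Classical.propDecidable _) 1 0) * F v
      = (if v = u + 1 then F v else 0) + (if v = u + 4 then F v else 0) := by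
    intro v
    by_cases h1 : v = u + 1 <;> by_cases h2 : v = u + 4
    · exact absurd (h1.symm.trans h2) (f5a u)
    · rw [if_pos ((c5adj u v).2 (Or.inl h1)), if_pos h1, if_neg h2, one_mul, add_zero]
    · rw [if_pos ((c5adj u v).2 (Or.inr h2)), if_neg h1, if_pos h2, one_mul, zero_add]
    · rw [if_neg (fun hc => ((c5adj u v).1 hc).elim h1 h2), if_neg h1, if_neg h2, zero_mul,
        add_zero]
  rw [Finset.sum_congr rfl (fun v _ => h1 v), Finset.sum_add_distrib,
    Finset.sum_ite_eq' Finset.univ (u + 1) F, Finset.sum_ite_eq' Finset.univ (u + 4) F]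
  simp

lemma c5_eig (μ : ℝ) (hm : eigMult (SimpleGraph.cycleGraph 5) μ = 2) :
    μ ^ 2 + μ - 1 = 0 := by
  by_contra hp'
  have hp : μ ^ 2 + μ - 1 ≠ 0 := hp'
  have hle : Module.End.eigenspace (adjMat (SimpleGraph.cycleGraph 5)).mulVecLin μ
      ≤ Submodule.span ℝ {(![μ - 1, 1, 1, μ - 1, μ ^ 2 - μ - 1] : Fin 5 → ℝ)} := by
    intro f hf
    rw [mem_eig_iff] at hf
    have heq : ∀ u : Fin 5, f (u + 1) + f (u + 4) = μ * f u := by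
      intro u
      have h := hf u
      rwa [c5row] at h
    have e0 := heq 0
    have e1 := heq 1
    have e2 := heq 2
    have e3 := heq 3
    simp only [show (0:Fin 5) + 1 = 1 from by decide, show (0:Fin 5) + 4 = 4 from by decide,
      show (1:Fin 5) + 1 = 2 from by decide, show (1:Fin 5) + 4 = 0 from by decide,
      show (2:Fin 5) + 1 = 3 from by decide, show (2:Fin 5) + 4 = 1 from by decide,
      show (3:Fin 5) + 1 = 4 from by decide, show (3:Fin 5) + 4 = 2 from by decide] at e0 e1 e2 e3
    have hv0 : f 0 = (μ - 1) * f 1 := by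
      apply mul_left_cancel₀ hp
      linear_combination (-1 : ℝ) * e0 + (μ ^ 2 - 1) * e1 + μ * e2 + e3
    have hv2 : f 2 = f 1 := by linear_combination e1 - hv0
    have hv3 : f 3 = (μ - 1) * f 1 := by linear_combination e2 + μ * hv2
    have hv4 : f 4 = (μ ^ 2 - μ - 1) * f 1 := by linear_combination e0 + μ * hv0
    rw [Submodule.mem_span_singleton]
    refine ⟨f 1, ?_⟩
    funext v
    fin_cases v
    · show f 1 * (μ - 1) = f 0
      linear_combination -hv0
    · show f 1 * 1 = f 1
      ring
    · show f 1 * 1 = f 2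
      linear_combination -hv2
    · show f 1 * (μ - 1) = f 3
      linear_combination -hv3
    · show f 1 * (μ ^ 2 - μ - 1) = f 4
      linear_combination -hv4
  have hw0 : (![μ - 1, 1, 1, μ - 1, μ ^ 2 - μ - 1] : Fin 5 → ℝ) ≠ 0 := by
    intro h
    have h2 := congrFun h 1
    simp at h2
  have hfin : finrank ℝ (Module.End.eigenspace (adjMat (SimpleGraph.cycleGraph 5)).mulVecLin μ)
      ≤ 1 := by
    calc finrank ℝ (Module.End.eigenspace (adjMat (SimpleGraph.cycleGraph 5)).mulVecLin μ)
        ≤ finrank ℝ (Submodule.span ℝ {(![μ - 1, 1, 1, μ - 1, μ ^ 2 - μ - 1] : Fin 5 → ℝ)}) :=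
          Submodule.finrank_mono hle
      _ = 1 := finrank_span_singleton hw0
  rw [eigMult] at hm
  omega

noncomputable def gC5 (μ : ℝ) : Fin 5 → ℝ := ![0, 1, μ, -μ, -1]

@[simp] lemma gC5_0 (μ : ℝ) : gC5 μ 0 = 0 := rfl
@[simp] lemma gC5_1 (μ : ℝ) : gC5 μ 1 = 1 := rfl
@[simp] lemma gC5_2 (μ : ℝ) : gC5 μ 2 = μ := rfl
@[simp] lemma gC5_3 (μ : ℝ) : gC5 μ 3 = -μ := rfl
@[simp] lemma gC5_4 (μ : ℝ) : gC5 μ 4 = -1 := rfl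

lemma c5_del (μ : ℝ) (hp : μ ^ 2 + μ - 1 = 0) (x : Fin 5) :
    Module.finrank ℝ (delSpace (SimpleGraph.cycleGraph 5) x μ) = 1 := by
  have hW0 : (fun u => gC5 μ (u - x)) ≠ (0 : Fin 5 → ℝ) := by
    intro h
    have h2 := congrFun h (x + 1)
    simp [f5c1 x] at h2
  have hspan : delSpace (SimpleGraph.cycleGraph 5) x μ
      = Submodule.span ℝ {fun u => gC5 μ (u - x)} := by
    apply le_antisymm
    · intro F hF
      obtain ⟨hF0, hFeq⟩ := hF
      have heq : ∀ u : Fin 5, u ≠ x → F (u + 1) + F (u + 4) = μ * F u := by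
        intro u hu
        have h := hFeq u hu
        rwa [c5row] at h
      have e1 := heq (x + 1) (f5b1 x)
      rw [f5d1 x, f5d2 x, hF0] at e1
      have e2 := heq (x + 2) (f5b2 x)
      rw [f5d3 x, f5d4 x] at e2
      have e3 := heq (x + 3) (f5b3 x)
      rw [f5d5 x, f5d6 x] at e3
      rw [Submodule.mem_span_singleton]
      refine ⟨F (x + 1), ?_⟩
      funext u
      simp only [Pi.smul_apply, smul_eq_mul]
      rcases f5cover x u with h | h | h | h | h <;> rw [h]
      · rw [f5c0 x, gC5_0, mul_zero]
        exact hF0.symm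
      · rw [f5c1 x, gC5_1, mul_one]
      · rw [f5c2 x, gC5_2]
        linear_combination -e1
      · rw [f5c3 x, gC5_3]
        linear_combination -e2 - μ * e1 - F (x + 1) * hp
      · rw [f5c4 x, gC5_4]
        linear_combination -e3 - μ * e2 + (1 - μ ^ 2) * e1 + (1 - μ) * F (x + 1) * hp
    · rw [Submodule.span_le, Set.singleton_subset_iff]
      refine ⟨by simp [f5c0 x], ?_⟩
      intro u hu
      rw [c5row]
      simp only []
      rcases f5cover x u with h | h | h | h | h <;> rw [h]
      · exact absurd h hu
      · rw [f5d1 x, f5d2 x, f5c2 x, f5c0 x, f5c1 x, gC5_0, gC5_1, gC5_2]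
        ring
      · rw [f5d3 x, f5d4 x, f5c3 x, f5c1 x, f5c2 x, gC5_1, gC5_2, gC5_3]
        linear_combination -hp
      · rw [f5d5 x, f5d6 x, f5c4 x, f5c2 x, f5c3 x, gC5_2, gC5_3, gC5_4]
        linear_combination hp
      · rw [f5d7 x, f5d8 x, f5c0 x, f5c3 x, f5c4 x, gC5_0, gC5_3, gC5_4]
        ring
  rw [hspan]
  exact finrank_span_singleton hW0

end c5

section main

lemma eigMult_inst {V : Type*} (i1 i2 : Fintype V) (G : SimpleGraph V) (μ : ℝ) :
    @eigMult V i1 G μ = @eigMult V i2 G μ := by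
  obtain rfl := Subsingleton.elim i1 i2
  rfl

def delIso {V W : Type*} {G : SimpleGraph V} {H : SimpleGraph W} (e : G ≃g H) (x : V) :
    delV G x ≃g delV H (e x) where
  toEquiv := e.toEquiv.subtypeEquiv (fun u => not_congr
    ⟨fun h => by rw [h]; rfl, fun h => e.toEquiv.injective h⟩)
  map_rel_iff' := e.map_adj_iff


theorem stmt11 {V : Type*} [Fintype V] (G : SimpleGraph V)
    (hG : (∃ a, Nonempty (G ≃g triStar a)) ∨ Nonempty (G ≃g SimpleGraph.cycleGraph 5))
    (μ : ℝ) (hμ : μ ≠ 0) (hm : eigMult G μ = 2) :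
    ∀ x : V, eigMult (delV G x) μ = 1 := by
  intro x
  cases hG with
  | inl h =>
    obtain ⟨a, ⟨e⟩⟩ := h
    rw [eigMult_iso e μ] at hm
    have hq := triStar_eig a μ hμ hm
    have h1 := eigMult_iso (delIso e x) μ
    have h2 := eigMult_delV (triStar a) (e x) μ
    exact h1.trans ((eigMult_inst _ _ _ μ).trans (h2.trans (triStar_del a μ hμ hq (e x))))
  | inr h =>
    obtain ⟨e⟩ := h
    rw [eigMult_iso e μ] at hm
    have hp := c5_eig μ hm
    have h1 := eigMult_iso (delIso e x) μ
    have h2 := eigMult_delV (SimpleGraph.cycleGraph 5) (e x) μ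
    exact h1.trans ((eigMult_inst _ _ _ μ).trans (h2.trans (c5_del μ hp (e x))))


end main
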